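/- Let X and Y be real random variables on a common probability space such that E[(max(Y,0))²] < ∞, and suppose that the law of X satisfies condition (TO). Then for every κ > 0, ∫_κ^∞ x·P(X ≥ x/2) / (1 + ∫_0^x ∫_y^∞ max(P(X ≤ −2z) − P(Y ≥ z), 0) dz dy) dx < ∞, where the integrand is interpreted as 0 at points x where the double integral in the denominator is infinite. -/

import Mathlib

open MeasureTheory Set
open scoped ENNReal

/-- The denominator in condition (TO): `1 + ∫_0^x ∫_y^∞ μ((−∞,−z]) dz dy`. -/
noncomputable def TOden (μ : Measure ℝ) (x : ℝ) : ENNReal :=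
  1 + ∫⁻ y in Ioc (0 : ℝ) x, ∫⁻ z in Ioi y, μ (Iic (-z))

/-- A Borel measure `μ` on `ℝ` satisfies condition (TO) at level `κ > 0` if
`∫_κ^∞ x·μ([x,∞)) / (1 + ∫_0^x ∫_y^∞ μ((−∞,−z]) dz dy) dx < ∞`; the `ENNReal`
division is `0` whenever the denominator is infinite. -/
def TOat (μ : Measure ℝ) (κ : ℝ) : Prop :=
  (∫⁻ x in Ioi κ, (ENNReal.ofReal x * μ (Ici x)) / TOden μ x) < ⊤

/-- `μ` satisfies condition (TO) if it satisfies (TO) at some level `κ > 0`. -/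
def TO (μ : Measure ℝ) : Prop := ∃ κ > (0 : ℝ), TOat μ κ

section Aux

open ENNReal

/-- Scaling a Lebesgue integral by a positive constant. -/
lemma lintegral_scale_aux (f : ℝ → ℝ≥0∞) (hf : Measurable f) {c : ℝ} (hc : 0 < c)
    {s : Set ℝ} (hs : MeasurableSet s) :
    ∫⁻ x in (c * ·) ⁻¹' s, f (c * x) = ENNReal.ofReal c⁻¹ * ∫⁻ u in s, f u := by
  have hT : Measurable fun x : ℝ => c * x := measurable_id.const_mul c
  have h2 : ∫⁻ u, f u ∂(((volume : Measure ℝ).restrict ((c * ·) ⁻¹' s)).map (c * ·))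
      = ∫⁻ x in (c * ·) ⁻¹' s, f (c * x) := lintegral_map hf hT
  rw [← h2, ← Measure.restrict_map hT hs, Real.map_volume_mul_left hc.ne',
    Measure.restrict_smul, lintegral_smul_measure, abs_inv, abs_of_pos hc, smul_eq_mul]

lemma lintegral_scale_Ioi (f : ℝ → ℝ≥0∞) (hf : Measurable f) {c : ℝ} (hc : 0 < c) (a : ℝ) :
    ∫⁻ x in Ioi a, f (c * x) = ENNReal.ofReal c⁻¹ * ∫⁻ u in Ioi (c * a), f u := by
  have h : (c * ·) ⁻¹' (Ioi (c * a)) = Ioi a := by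
    rw [preimage_const_mul_Ioi₀ _ hc, mul_div_cancel_left₀ _ hc.ne']
  rw [← h, lintegral_scale_aux f hf hc measurableSet_Ioi]

lemma lintegral_scale_Ioc (f : ℝ → ℝ≥0∞) (hf : Measurable f) {c : ℝ} (hc : 0 < c) (b : ℝ) :
    ∫⁻ x in Ioc 0 b, f (c * x) = ENNReal.ofReal c⁻¹ * ∫⁻ u in Ioc 0 (c * b), f u := by
  have h : (c * ·) ⁻¹' (Ioc 0 (c * b)) = Ioc 0 b := by
    rw [preimage_const_mul_Ioc₀ _ _ hc, mul_div_cancel_left₀ _ hc.ne', zero_div]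
  rw [← h, lintegral_scale_aux f hf hc measurableSet_Ioc]

/-- Finiteness of `∫_0^∞ ∫_y^∞ P(Y ≥ z) dz dy` given a second moment bound. -/
lemma tail_sq_lt_top {Ω} [MeasurableSpace Ω] (P : Measure Ω) [IsProbabilityMeasure P]
    (Y : Ω → ℝ) (hY : Measurable Y)
    (hY2 : Integrable (fun ω => max (Y ω) 0 ^ 2) P) :
    (∫⁻ y in Ioi (0 : ℝ), ∫⁻ z in Ioi y, P {ω | z ≤ Y ω}) < ⊤ := by
  set b : ℝ → ℝ≥0∞ := fun z => P {ω | z ≤ Y ω} with hbdef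
  have hb_anti : Antitone b := by
    intro z w hzw
    exact measure_mono fun ω hω => le_trans hzw hω
  have hb : Measurable b := hb_anti.measurable
  -- rewrite inner integral with indicator and swap
  have hswap : (∫⁻ y in Ioi (0 : ℝ), ∫⁻ z in Ioi y, b z)
      = ∫⁻ z, b z * ENNReal.ofReal z := by
    have h1 : (∫⁻ y in Ioi (0 : ℝ), ∫⁻ z in Ioi y, b z)
        = ∫⁻ y in Ioi (0 : ℝ), ∫⁻ z, (Ioi y).indicator b z := by
      refine lintegral_congr fun y => ?_
      rw [lintegral_indicator measurableSet_Ioi]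
    have hmeas : AEMeasurable (Function.uncurry fun y z => (Ioi y).indicator b z)
        ((volume.restrict (Ioi (0 : ℝ))).prod (volume : Measure ℝ)) := by
      have heq : (Function.uncurry fun y z => (Ioi y).indicator b z)
          = {p : ℝ × ℝ | p.1 < p.2}.indicator (fun p => b p.2) := by
        funext p
        by_cases h : p.1 < p.2 <;>
          simp [Function.uncurry, Set.indicator_apply, h]
      rw [heq]
      exact ((hb.comp measurable_snd).indicator
        (measurableSet_lt measurable_fst measurable_snd)).aemeasurable
    rw [h1, lintegral_lintegral_swap hmeas]
    refine lintegral_congr fun z => ?_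
    have h2 : ∀ y : ℝ, (Ioi y).indicator b z = (Iio z).indicator (fun _ => b z) y := by
      intro y
      simp only [Set.indicator_apply, mem_Ioi, mem_Iio]
    simp_rw [h2]
    rw [lintegral_indicator measurableSet_Iio, Measure.restrict_restrict measurableSet_Iio,
      setLIntegral_const]
    have h3 : Iio z ∩ Ioi (0 : ℝ) = Ioo 0 z := by
      ext t; simp [mem_Ioo, and_comm]
    rw [h3, Real.volume_Ioo, sub_zero]
  rw [hswap]
  -- split off the nonpositive part
  have hsplit : (∫⁻ z, b z * ENNReal.ofReal z)
      = ∫⁻ z in Ioi (0 : ℝ), b z * ENNReal.ofReal z := by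
    rw [← lintegral_add_compl (fun z => b z * ENNReal.ofReal z) measurableSet_Ioi
      (μ := (volume : Measure ℝ))]
    have : (∫⁻ z in (Ioi (0 : ℝ))ᶜ, b z * ENNReal.ofReal z) = 0 := by
      rw [compl_Ioi]
      have hz0 : ∀ z ∈ Iic (0:ℝ), b z * ENNReal.ofReal z = (fun _ => (0:ℝ≥0∞)) z := fun z hz => by
        rw [ENNReal.ofReal_eq_zero.2 hz, mul_zero]
      rw [setLIntegral_congr_fun measurableSet_Iic hz0,
        lintegral_zero]
    rw [this, add_zero]
  rw [hsplit]
  -- layer cake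
  have f_nn : 0 ≤ᵐ[P] fun ω => max (Y ω) 0 :=
    Filter.Eventually.of_forall fun ω => le_max_right _ _
  have f_mble : AEMeasurable (fun ω => max (Y ω) 0) P :=
    (hY.max measurable_const).aemeasurable
  have g_intble : ∀ t > (0 : ℝ), IntervalIntegrable (fun t : ℝ => t) volume 0 t :=
    fun _ _ => intervalIntegral.intervalIntegrable_id
  have g_nn : ∀ᵐ t ∂volume.restrict (Ioi (0 : ℝ)), 0 ≤ t :=
    (ae_restrict_iff' measurableSet_Ioi).2
      (Filter.Eventually.of_forall fun t ht => le_of_lt ht)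
  have lc := lintegral_comp_eq_lintegral_meas_le_mul P f_nn f_mble g_intble g_nn
  have hsets : (∫⁻ z in Ioi (0 : ℝ), b z * ENNReal.ofReal z)
      = ∫⁻ t in Ioi (0 : ℝ), P {a | t ≤ max (Y a) 0} * ENNReal.ofReal t := by
    refine setLIntegral_congr_fun measurableSet_Ioi
      (fun t ht => ?_)
    have : {ω | t ≤ Y ω} = {a | t ≤ max (Y a) 0} := by
      ext a
      simp only [mem_setOf_eq, le_max_iff]
      exact ⟨Or.inl, fun h => h.elim id fun h0 => absurd (lt_of_lt_of_le ht h0) (lt_irrefl 0)⟩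
    rw [hbdef]; simp only [this]
  rw [hsets, ← lc]
  -- the left side of the layer cake is controlled by the second moment
  have hbound : (∫⁻ ω, ENNReal.ofReal (∫ t in (0 : ℝ)..(max (Y ω) 0), t) ∂P)
      ≤ ∫⁻ ω, ‖max (Y ω) 0 ^ 2‖₊ ∂P := by
    refine lintegral_mono fun ω => ?_
    rw [integral_id]
    refine le_trans (ENNReal.ofReal_le_ofReal ?_) (Real.ofReal_le_enorm _)
    have h0 : (0 : ℝ) ≤ max (Y ω) 0 ^ 2 := sq_nonneg _
    nlinarith [sq_nonneg (max (Y ω) 0)]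
  exact lt_of_le_of_lt hbound hY2.2

end Aux

/-- If `E[(max(Y,0))²] < ∞` and the law of `X` satisfies (TO), then for every
`κ > 0`,
`∫_κ^∞ x·P(X ≥ x/2) / (1 + ∫_0^x ∫_y^∞ (P(X ≤ −2z) − P(Y ≥ z))₊ dz dy) dx < ∞`,
where in `ℝ≥0∞` the truncated subtraction realizes `max(· − ·, 0)` and division
by an infinite denominator gives `0`. -/
theorem TO_half_with_error {Ω : Type*} [MeasurableSpace Ω] (P : Measure Ω)
    [IsProbabilityMeasure P] (X Y : Ω → ℝ) (hX : Measurable X) (hY : Measurable Y)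
    (hY2 : Integrable (fun ω => max (Y ω) 0 ^ 2) P)
    (hTO : TO (P.map X)) (κ : ℝ) (hκ : 0 < κ) :
    (∫⁻ x in Ioi κ,
        (ENNReal.ofReal x * P {ω | x / 2 ≤ X ω}) /
          (1 + ∫⁻ y in Ioc (0 : ℝ) x, ∫⁻ z in Ioi y,
              (P {ω | X ω ≤ -(2 * z)} - P {ω | z ≤ Y ω}))) < ⊤ := by
  classical
  obtain ⟨κ₀, hκ₀, hTO₀⟩ := hTO
  set μ : Measure ℝ := P.map X with hμdef
  -- identify P-probabilities with μ-measures
  have hP1 : ∀ t : ℝ, P {ω | t ≤ X ω} = μ (Ici t) := by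
    intro t
    rw [hμdef, Measure.map_apply hX measurableSet_Ici]
    rfl
  have hP2 : ∀ t : ℝ, P {ω | X ω ≤ t} = μ (Iic t) := by
    intro t
    rw [hμdef, Measure.map_apply hX measurableSet_Iic]
    rfl
  set b : ℝ → ℝ≥0∞ := fun z => P {ω | z ≤ Y ω} with hbdef
  have hb_anti : Antitone b := fun z w hzw => measure_mono fun ω hω => le_trans hzw hω
  have hb : Measurable b := hb_anti.measurable
  set C : ℝ≥0∞ := ∫⁻ y in Ioi (0 : ℝ), ∫⁻ z in Ioi y, b z with hCdef
  have hC : C < ⊤ := tail_sq_lt_top P Y hY hY2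
  set K : ℝ≥0∞ := 5 + 4 * C with hKdef
  have hK0 : K ≠ 0 := by simp [hKdef]
  have hKtop : K ≠ ⊤ := by
    rw [hKdef]
    exact ENNReal.add_ne_top.2 ⟨by norm_num, ENNReal.mul_ne_top (by norm_num) hC.ne⟩
  set L : ℝ := max κ (2 * κ₀) with hLdef
  have hLκ : κ ≤ L := le_max_left _ _
  have hL0 : 0 < L := lt_of_lt_of_le hκ hLκ
  -- notation for the various integrands
  set h : ℝ → ℝ≥0∞ := fun v => μ (Iic (-v)) with hhdef
  have hh_anti : Antitone h := fun v w hvw => measure_mono (Iic_subset_Iic.2 (by linarith))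
  have hh : Measurable h := hh_anti.measurable
  set H : ℝ → ℝ≥0∞ := fun u => ∫⁻ v in Ioi u, h v with hHdef
  have hH_anti : Antitone H := fun u w huw => lintegral_mono_set (Ioi_subset_Ioi huw)
  have hH : Measurable H := hH_anti.measurable
  set a : ℝ → ℝ≥0∞ := fun z => μ (Iic (-(2 * z))) with hadef
  set S : ℝ → ℝ≥0∞ := fun x => ∫⁻ y in Ioc (0 : ℝ) x, ∫⁻ z in Ioi y, (a z - b z) with hSdef
  set A : ℝ → ℝ≥0∞ := fun x => ∫⁻ y in Ioc (0 : ℝ) x, ∫⁻ z in Ioi y, a z with hAdef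
  set h₀ : ℝ → ℝ≥0∞ := fun u => ENNReal.ofReal u * μ (Ici u) / TOden μ u with hh₀def
  have hμIci_anti : Antitone fun u : ℝ => μ (Ici u) :=
    fun u w huw => measure_mono (Ici_subset_Ici.2 huw)
  have hTOden_mono : Monotone (TOden μ) := by
    intro t₁ t₂ ht
    exact add_le_add_right (lintegral_mono_set (Ioc_subset_Ioc_right ht)) 1
  have hTOden_meas : Measurable (TOden μ) :=
    ((Monotone.measurable
      (fun t₁ t₂ ht => lintegral_mono_set (Ioc_subset_Ioc_right ht))).const_add 1)
  have hh₀ : Measurable h₀ :=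
    ((ENNReal.measurable_ofReal.comp measurable_id).mul hμIci_anti.measurable).div hTOden_meas
  -- A x ≤ S x + C
  have hAS : ∀ x : ℝ, A x ≤ S x + C := by
    intro x
    have hBC : (∫⁻ y in Ioc (0 : ℝ) x, ∫⁻ z in Ioi y, b z) ≤ C :=
      lintegral_mono_set fun y hy => hy.1
    have houter : A x - (∫⁻ y in Ioc (0 : ℝ) x, ∫⁻ z in Ioi y, b z) ≤ S x := by
      refine le_trans (lintegral_sub_le _ _ ?_) (lintegral_mono fun y => ?_)
      · exact Antitone.measurable fun u w huw => lintegral_mono_set (Ioi_subset_Ioi huw)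
      · exact lintegral_sub_le _ _ hb
    have h1 : A x - C ≤ A x - (∫⁻ y in Ioc (0 : ℝ) x, ∫⁻ z in Ioi y, b z) :=
      tsub_le_tsub_left hBC _
    exact tsub_le_iff_right.1 (le_trans h1 houter)
  -- scaling: TOden μ (2x) = 1 + 4 * A x
  have hscale : ∀ x : ℝ, TOden μ (2 * x) = 1 + 4 * A x := by
    intro x
    have hinner : ∀ y : ℝ, (∫⁻ z in Ioi y, a z) = ENNReal.ofReal 2⁻¹ * H (2 * y) := by
      intro y
      rw [hHdef]
      exact lintegral_scale_Ioi h hh (by norm_num) y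
    have hmid : A x = ENNReal.ofReal 2⁻¹ *
        (ENNReal.ofReal 2⁻¹ * ∫⁻ u in Ioc (0 : ℝ) (2 * x), H u) := by
      rw [hAdef]
      simp only [hinner]
      rw [lintegral_const_mul _ (show Measurable fun y : ℝ => H (2 * y) from hH.comp (measurable_id.const_mul 2)),
        lintegral_scale_Ioc H hH (by norm_num) x]
    have h2 : ENNReal.ofReal (2 : ℝ)⁻¹ = 2⁻¹ := by
      rw [ENNReal.ofReal_inv_of_pos (by norm_num)]
      norm_num
    have hE : (4 : ℝ≥0∞) * A x = ∫⁻ u in Ioc (0 : ℝ) (2 * x), H u := by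
      rw [hmid, h2, ← mul_assoc, ← mul_assoc]
      norm_num
      have h22 : (2 : ℝ≥0∞) * 2⁻¹ = 1 := ENNReal.mul_inv_cancel (by norm_num) (by norm_num)
      have h4 : (4 : ℝ≥0∞) * 2⁻¹ * 2⁻¹ = 1 := by
        calc (4 : ℝ≥0∞) * 2⁻¹ * 2⁻¹ = 2 * (2 * 2⁻¹) * 2⁻¹ := by
              rw [show (4 : ℝ≥0∞) = 2 * 2 by norm_num, mul_assoc 2 2]
          _ = 1 := by rw [h22, mul_one]; exact h22
      rw [h4, one_mul]
    rw [TOden, ← hE]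
  -- the key denominator comparison
  have hden : ∀ x : ℝ, TOden μ (2 * x) ≤ K * (1 + S x) := by
    intro x
    rw [hscale x]
    calc (1 : ℝ≥0∞) + 4 * A x ≤ 1 + 4 * (S x + C) := by gcongr; exact hAS x
      _ = (1 + 4 * C) + 4 * S x := by ring
      _ ≤ (5 + 4 * C) + (5 + 4 * C) * S x := by
          gcongr
          · norm_num
          · exact le_add_right (by norm_num)
      _ = K * (1 + S x) := by rw [hKdef]; ring
  -- pointwise bound on (L, ∞)
  have hpt : ∀ x ∈ Ioi L,
      (ENNReal.ofReal x * μ (Ici (x / 2))) / (1 + S x) ≤ 2 * K * h₀ (2⁻¹ * x) := by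
    intro x hx
    have hx0 : 0 < x := lt_trans hL0 hx
    have hmono : TOden μ (x / 2) ≤ TOden μ (2 * x) := hTOden_mono (by linarith)
    have hofReal : ENNReal.ofReal x = 2 * ENNReal.ofReal (x / 2) := by
      have h1 : ENNReal.ofReal (2 * (x / 2)) = ENNReal.ofReal 2 * ENNReal.ofReal (x / 2) :=
        ENNReal.ofReal_mul (by norm_num)
      rw [show (2 : ℝ) * (x / 2) = x by ring] at h1
      rw [h1, ENNReal.ofReal_ofNat]
    calc (ENNReal.ofReal x * μ (Ici (x / 2))) / (1 + S x)
        = (K * (ENNReal.ofReal x * μ (Ici (x / 2)))) / (K * (1 + S x)) :=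
          (ENNReal.mul_div_mul_left _ _ hK0 hKtop).symm
      _ ≤ (K * (ENNReal.ofReal x * μ (Ici (x / 2)))) / TOden μ (2 * x) :=
          ENNReal.div_le_div_left (hden x) _
      _ ≤ (K * (ENNReal.ofReal x * μ (Ici (x / 2)))) / TOden μ (x / 2) :=
          ENNReal.div_le_div_left hmono _
      _ = 2 * K * (ENNReal.ofReal (x / 2) * μ (Ici (x / 2)) / TOden μ (x / 2)) := by
          rw [hofReal, ← mul_div_assoc]
          ring_nf
      _ = 2 * K * h₀ (2⁻¹ * x) := by
          simp only [hh₀def]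
          rw [show (2 : ℝ)⁻¹ * x = x / 2 by ring]
  -- rewrite the target integrand
  have hrw : ∀ x : ℝ,
      (ENNReal.ofReal x * P {ω | x / 2 ≤ X ω}) /
          (1 + ∫⁻ y in Ioc (0 : ℝ) x, ∫⁻ z in Ioi y,
              (P {ω | X ω ≤ -(2 * z)} - P {ω | z ≤ Y ω}))
        = (ENNReal.ofReal x * μ (Ici (x / 2))) / (1 + S x) := by
    intro x
    rw [hP1 (x / 2)]
    congr 1
    rw [hSdef]
    congr 1
    refine lintegral_congr fun y => lintegral_congr fun z => ?_
    rw [hP2 (-(2 * z))]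
  simp_rw [hrw]
  -- split the integral at L
  have hsub : Ioi κ ⊆ Ioc κ L ∪ Ioi L := by
    intro x hx
    rcases le_or_gt x L with h | h
    · exact Or.inl ⟨hx, h⟩
    · exact Or.inr h
  refine lt_of_le_of_lt (le_trans (lintegral_mono_set hsub) (lintegral_union_le _ _ _)) ?_
  have hfin1 : (∫⁻ x in Ioc κ L, (ENNReal.ofReal x * μ (Ici (x / 2))) / (1 + S x)) < ⊤ := by
    have hb1 : ∀ x ∈ Ioc κ L,
        (ENNReal.ofReal x * μ (Ici (x / 2))) / (1 + S x) ≤ ENNReal.ofReal L := by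
      intro x hx
      calc (ENNReal.ofReal x * μ (Ici (x / 2))) / (1 + S x)
          ≤ (ENNReal.ofReal L * 1) / 1 :=
            ENNReal.div_le_div (mul_le_mul (ENNReal.ofReal_le_ofReal hx.2) prob_le_one
              zero_le zero_le) le_self_add
        _ = ENNReal.ofReal L := by rw [mul_one, div_one]
    calc (∫⁻ x in Ioc κ L, (ENNReal.ofReal x * μ (Ici (x / 2))) / (1 + S x))
        ≤ ∫⁻ _ in Ioc κ L, ENNReal.ofReal L := setLIntegral_mono' measurableSet_Ioc hb1
      _ = ENNReal.ofReal L * volume (Ioc κ L) := setLIntegral_const _ _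
      _ < ⊤ := ENNReal.mul_lt_top ENNReal.ofReal_lt_top
          (by rw [Real.volume_Ioc]; exact ENNReal.ofReal_lt_top)
  have hfin2 : (∫⁻ x in Ioi L, (ENNReal.ofReal x * μ (Ici (x / 2))) / (1 + S x)) < ⊤ := by
    refine lt_of_le_of_lt (setLIntegral_mono' measurableSet_Ioi hpt) ?_
    rw [lintegral_const_mul _ (show Measurable fun x : ℝ => h₀ (2⁻¹ * x) from hh₀.comp (measurable_id.const_mul 2⁻¹)),
      lintegral_scale_Ioi h₀ hh₀ (by norm_num : (0:ℝ) < 2⁻¹) L]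
    have h2 : ENNReal.ofReal ((2 : ℝ)⁻¹)⁻¹ = 2 := by norm_num
    rw [h2]
    have htail : (∫⁻ u in Ioi (2⁻¹ * L), h₀ u) ≤ ∫⁻ u in Ioi κ₀, h₀ u := by
      refine lintegral_mono_set (Ioi_subset_Ioi ?_)
      have : 2 * κ₀ ≤ L := le_max_right _ _
      linarith
    have hfin : (∫⁻ u in Ioi κ₀, h₀ u) < ⊤ := hTO₀
    calc 2 * K * (2 * ∫⁻ u in Ioi (2⁻¹ * L), h₀ u)
        ≤ 2 * K * (2 * ∫⁻ u in Ioi κ₀, h₀ u) := by gcongr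
      _ < ⊤ := by
          refine ENNReal.mul_lt_top ?_ (ENNReal.mul_lt_top (by norm_num) hfin)
          exact ENNReal.mul_lt_top (by norm_num) (lt_top_iff_ne_top.2 hKtop)
  exact ENNReal.add_lt_top.2 ⟨hfin1, hfin2⟩
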